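/- In the three-door game with the prize door p chosen uniformly at random from Fin 3, every always-switching strategy (x, fun _ => true) wins with probability exactly 2/3 against every Monte strategy m: the probability under the uniform distribution on Fin 3 of the event {p | Conie wins against m with prize door p} equals 2/3. -/

import Mathlib

/-- The door Monte offers: if Conie's guess `x` equals the prize door `p`,
Monte offers `m p`; otherwise he is forced to reveal the third door, so the
offer is `p` itself. -/
def offered (m : Fin 3 → Fin 3) (x p : Fin 3) : Fin 3 :=
  if p = x then m p else p

/-- Conie's final choice given her strategy `(x, d)`, Monte's strategy `m`
and prize door `p`. -/
def finalChoice (x : Fin 3) (d : Fin 3 → Bool) (m : Fin 3 → Fin 3) (p : Fin 3) : Fin 3 :=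
  if d (offered m x p) then offered m x p else x

/-- With the prize door uniformly random on `Fin 3`, every always-switching
strategy wins with probability exactly `2/3` against every Monte strategy. -/
theorem always_switch_wins_prob_two_thirds (x : Fin 3)
    (m : Fin 3 → Fin 3) (hm : ∀ v, m v ≠ v) :
    (PMF.uniformOfFintype (Fin 3)).toMeasure
      {p : Fin 3 | finalChoice x (fun _ => true) m p = p} = 2 / 3 := by
  have hset : {p : Fin 3 | finalChoice x (fun _ => true) m p = p} = {x}ᶜ := by
    ext p
    simp only [Set.mem_setOf_eq, finalChoice, offered, if_true, Set.mem_compl_iff,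
      Set.mem_singleton_iff]
    by_cases h : p = x
    · subst h
      simp [hm p]
    · simp [h]
  rw [hset, PMF.toMeasure_apply _ (measurableSet_singleton x).compl, tsum_fintype]
  have huni : ∀ p : Fin 3, (PMF.uniformOfFintype (Fin 3)) p = 3⁻¹ := by
    intro p; simp [PMF.uniformOfFintype_apply]
  have h23 : (2 : ENNReal) / 3 = 3⁻¹ + 3⁻¹ := by
    rw [ENNReal.div_eq_inv_mul, mul_two]
  fin_cases x <;>
    simp [Fin.sum_univ_three, Set.indicator, huni, h23]
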